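/- Let D ≥ 2 and m ≥ 1 be integers with 2m ≤ D, let a ∈ ℝ, and let f ∈ ℝ[X] be a monic polynomial of degree D. Then the following are equivalent: (i) there exist a monic polynomial Q ∈ ℝ[X] of degree D − 2m and real numbers s, ρ such that f = Q·(X − a)^{2m} + s·X + ρ; (ii) (X − a)^{2(m−1)} divides the second derivative f″, i.e. f″ = R·(X − a)^{2(m−1)} for some polynomial R ∈ ℝ[X] (which then necessarily has leading coefficient D(D−1)). -/

import Mathlib

open Polynomial

lemma natDegree_le_one_of_dd {r : ℝ[X]} (h : derivative (derivative r) = 0) :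
    r.natDegree ≤ 1 := by
  have h1 : (derivative r).natDegree = 0 := natDegree_eq_zero_of_derivative_eq_zero h
  by_contra hc
  push_neg at hc
  have hpos : 0 < r.natDegree := by omega
  have := degree_derivative_eq r hpos
  have h2 : (derivative r).natDegree = r.natDegree - 1 :=
    natDegree_eq_of_degree_eq_some this
  omega

/-- For a monic polynomial `f` of degree `D ≥ 2m`, `f` has the form
`Q·(X - a)^{2m} + s·X + ρ` with `Q` monic of degree `D - 2m` if and only if
`(X - a)^{2(m-1)}` divides `f''`. -/
theorem statement5 (D m : ℕ) (hD : 2 ≤ D) (hm : 1 ≤ m) (hmD : 2 * m ≤ D) (a : ℝ)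
    (f : ℝ[X]) (hf : f.Monic) (hdeg : f.natDegree = D) :
    (∃ (Q : ℝ[X]) (s ρ : ℝ), Q.Monic ∧ Q.natDegree = D - 2 * m ∧
        f = Q * (X - C a) ^ (2 * m) + C s * X + C ρ) ↔
    (∃ R : ℝ[X], derivative (derivative f) = R * (X - C a) ^ (2 * (m - 1))) := by
  have hmm : 2 * (m - 1) = 2 * m - 2 := by omega
  constructor
  · rintro ⟨Q, s, ρ, hQ, hQd, rfl⟩
    have hdvd : (X - C a) ^ (2 * m) ∣ Q * (X - C a) ^ (2 * m) := dvd_mul_left _ _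
    have h2 : (X - C a) ^ (2 * m - 2) ∣ derivative^[2] (Q * (X - C a) ^ (2 * m)) :=
      pow_sub_dvd_iterate_derivative_of_pow_dvd 2 hdvd
    rw [show (derivative^[2] (Q * (X - C a) ^ (2 * m))) =
        derivative (derivative (Q * (X - C a) ^ (2 * m))) from rfl] at h2
    obtain ⟨R, hR⟩ := h2
    refine ⟨R, ?_⟩
    have : derivative (derivative (Q * (X - C a) ^ (2 * m) + C s * X + C ρ)) =
        derivative (derivative (Q * (X - C a) ^ (2 * m))) := by
      simp [derivative_add, derivative_mul]
    rw [this, hR, hmm, mul_comm]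
  · rintro ⟨R, hR⟩
    set q : ℝ[X] := (X - C a) ^ (2 * m) with hqdef
    have hq : q.Monic := (monic_X_sub_C a).pow _
    have hqd : q.natDegree = 2 * m := by
      simp [hqdef, natDegree_pow]
    set Q := f /ₘ q with hQdef
    set r := f %ₘ q with hrdef
    have hsum : r + q * Q = f := modByMonic_add_div f q
    have hrdeg : r.degree < q.degree := degree_modByMonic_lt f hq
    have hrnd : r.natDegree ≤ 2 * m - 1 := by
      rcases eq_or_ne r 0 with h0 | h0
      · simp [h0]
      · have := natDegree_lt_natDegree h0 hrdeg
        omega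
    -- second derivative of r is divisible by (X - a)^(2m-2)
    have hqQ : (X - C a) ^ (2 * m - 2) ∣ derivative (derivative (q * Q)) :=
      pow_sub_dvd_iterate_derivative_of_pow_dvd 2 (Dvd.intro Q rfl)
    have hf2 : (X - C a) ^ (2 * m - 2) ∣ derivative (derivative f) := by
      rw [hR, hmm]; exact Dvd.intro_left R rfl
    have hr2 : (X - C a) ^ (2 * m - 2) ∣ derivative (derivative r) := by
      have : derivative (derivative r) =
          derivative (derivative f) - derivative (derivative (q * Q)) := by
        conv_lhs => rw [show r = f - q * Q by rw [← hsum]; ring]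
        simp [derivative_sub]
      rw [this]
      exact dvd_sub hf2 hqQ
    have hr20 : derivative (derivative r) = 0 := by
      by_contra h0
      have hle : 2 * m - 2 ≤ (derivative (derivative r)).natDegree := by
        have := Polynomial.natDegree_le_of_dvd hr2 h0
        simpa [natDegree_pow] using this
      have h1 : (derivative r).natDegree ≤ 2 * m - 2 :=
        le_trans (natDegree_derivative_le r) (by omega)
      have h2 : (derivative (derivative r)).natDegree ≤ 2 * m - 3 :=
        le_trans (natDegree_derivative_le _) (by omega)
      -- need 2*m - 3 < 2*m - 2, i.e. m ≥ 2; for m = 1 the divisor is 1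
      rcases Nat.lt_or_ge m 2 with hm2 | hm2
      · -- m = 1 : natDegree r ≤ 1, so second derivative is 0
        have hr1 : r.natDegree ≤ 1 := by omega
        have : (derivative r).natDegree = 0 := by
          rcases Nat.eq_or_lt_of_le (natDegree_derivative_le r) with h | h <;> omega
        have : derivative (derivative r) = 0 := by
          have := eq_C_of_natDegree_eq_zero this
          rw [this]; simp
        exact h0 this
      · omega
    have hr1 : r.natDegree ≤ 1 := natDegree_le_one_of_dd hr20
    have hrX : r = C (r.coeff 1) * X + C (r.coeff 0) := eq_X_add_C_of_natDegree_le_one hr1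
    have hqdeg : q.degree ≤ f.degree := by
      rw [degree_eq_natDegree hq.ne_zero, degree_eq_natDegree hf.ne_zero, hqd, hdeg]
      exact_mod_cast hmD
    refine ⟨Q, r.coeff 1, r.coeff 0, ?_, ?_, ?_⟩
    · have := leadingCoeff_divByMonic_of_monic hq hqdeg
      rw [hf.leadingCoeff] at this
      exact this
    · rw [hQdef, natDegree_divByMonic f hq, hqd, hdeg]
    · rw [← hsum]
      conv_lhs => rw [hrX]
      ring
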